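/- Let G be a simple graph on the vertex set {1,…,n} with QUBO matrix Q, and let T be a subset of the vertices that is not an independent set. Then there exists an independent set S ⊂ T such that f(x_S) < f(x_T). -/

import Mathlib

open scoped Classical Matrix

/-- The QUBO matrix of a simple graph `G` on `{1,…,n}`:
`Q i i = -1`, `Q i j = 1` if `{i,j}` is an edge, and `Q i j = 0` otherwise. -/
noncomputable def quboQ {n : ℕ} (G : SimpleGraph (Fin n)) : Matrix (Fin n) (Fin n) ℤ :=
  fun i j => if i = j then -1 else if G.Adj i j then 1 else 0

/-- The indicator vector `x_T ∈ {0,1}ⁿ` of a set of vertices `T`. -/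
def indVec {n : ℕ} (T : Finset (Fin n)) : Fin n → ℤ := fun i => if i ∈ T then 1 else 0

/-- The QUBO objective `f(x) = xᵀ Q x`. -/
noncomputable def quboF {n : ℕ} (G : SimpleGraph (Fin n)) (x : Fin n → ℤ) : ℤ :=
  x ⬝ᵥ (quboQ G).mulVec x

/-- `E(T)`: the set of edges of `G` with both endpoints in `T`. -/
noncomputable def edgesIn {n : ℕ} (G : SimpleGraph (Fin n)) (T : Finset (Fin n)) :
    Finset (Sym2 (Fin n)) :=
  G.edgeFinset.filter fun e => ∀ v ∈ e, v ∈ T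

/-- `T` is an independent set of `G`: no edge of `G` has both endpoints in `T`. -/
def IsIndep {n : ℕ} (G : SimpleGraph (Fin n)) (T : Finset (Fin n)) : Prop :=
  ∀ a ∈ T, ∀ b ∈ T, ¬ G.Adj a b

lemma quboF_indVec_eq {n : ℕ} (G : SimpleGraph (Fin n)) (T : Finset (Fin n)) :
    quboF G (indVec T) = ∑ i ∈ T, ∑ j ∈ T, quboQ G i j := by
  classical
  simp only [quboF, dotProduct, Matrix.mulVec, dotProduct, indVec,
    mul_ite, mul_one, mul_zero, ite_mul, one_mul, zero_mul]
  rw [Finset.sum_ite_mem, Finset.univ_inter]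
  exact Finset.sum_congr rfl fun i _ => by
    rw [Finset.sum_ite_mem, Finset.univ_inter]

/-- If `T` is not independent, then there is an independent set
`S ⊂ T` with `f(x_S) < f(x_T)`. -/
theorem exists_indep_subset_quboF_lt {n : ℕ} (G : SimpleGraph (Fin n))
    (T : Finset (Fin n)) (hT : ¬ IsIndep G T) :
    ∃ S ⊂ T, IsIndep G S ∧ quboF G (indVec S) < quboF G (indVec T) := by
  classical
  revert hT
  induction T using Finset.strongInduction with
  | _ T ih =>
    intro hT
    simp only [IsIndep, not_forall] at hT
    obtain ⟨a, ha, b, hb, hab⟩ := hT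
    rw [not_not] at hab
    have hne : b ≠ a := fun h => (G.loopless.irrefl a) (h ▸ hab)
    set T' := T.erase a with hT'
    have hbT' : b ∈ T' := Finset.mem_erase.mpr ⟨hne, hb⟩
    have hss : T' ⊂ T := Finset.erase_ssubset ha
    have hkey : quboF G (indVec T') < quboF G (indVec T) := by
      have hsplit : ∀ f : Fin n → ℤ, ∑ i ∈ T, f i = ∑ i ∈ T', f i + f a :=
        fun f => (Finset.sum_erase_add T f ha).symm
      have hTsum : quboF G (indVec T) =
          ∑ i ∈ T', ∑ j ∈ T', quboQ G i j
            + ∑ j ∈ T', quboQ G a j + ∑ i ∈ T', quboQ G i a + quboQ G a a := by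
        rw [quboF_indVec_eq, hsplit, hsplit (fun j => quboQ G a j)]
        have : ∀ i, ∑ j ∈ T, quboQ G i j = ∑ j ∈ T', quboQ G i j + quboQ G i a :=
          fun i => (Finset.sum_erase_add T _ ha).symm
        simp only [this]
        rw [Finset.sum_add_distrib]
        ring
      have hrow : (1 : ℤ) ≤ ∑ j ∈ T', quboQ G a j := by
        have h1 : quboQ G a b = 1 := by
          have hne2 : a ≠ b := fun h => hne h.symm
          simp [quboQ, hne2, hab]
        calc (1 : ℤ) = quboQ G a b := h1.symm
          _ ≤ ∑ j ∈ T', quboQ G a j := by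
            refine Finset.single_le_sum (fun j hj => ?_) hbT'
            have : a ≠ j := fun h => (Finset.mem_erase.mp hj).1 h.symm
            simp only [quboQ, if_neg this]
            split <;> norm_num
      have hcol : (1 : ℤ) ≤ ∑ i ∈ T', quboQ G i a := by
        have h1 : quboQ G b a = 1 := by
          simp [quboQ, hne, hab.symm]
        calc (1 : ℤ) = quboQ G b a := h1.symm
          _ ≤ ∑ i ∈ T', quboQ G i a := by
            refine Finset.single_le_sum (f := fun i => quboQ G i a) (fun i hi => ?_) hbT'
            have : i ≠ a := (Finset.mem_erase.mp hi).1
            simp only [quboQ, if_neg this]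
            split <;> norm_num
      have haa : quboQ G a a = -1 := by simp [quboQ]
      rw [hTsum, quboF_indVec_eq]
      linarith
    by_cases h : IsIndep G T'
    · exact ⟨T', hss, h, hkey⟩
    · obtain ⟨S, hS, hind, hlt⟩ := ih T' hss h
      exact ⟨S, hS.trans hss, hind, hlt.trans hkey⟩
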